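/- The subtree rooted at address x = p 1 0^k (the set of addresses reachable from x by repeated application of CW and CCW, including x itself) equals the set { p s : s a binary string of length k+1, s ≠ 0^{k+1} }. In particular it has exactly 2^{k+1} − 1 elements. -/

import Mathlib

/-- Number of trailing zero bits (2-adic valuation) of an address. -/
def tz (x : ℕ) : ℕ := padicValNat 2 x

/-- Clockwise descendant: `p 1 0^k ↦ p 1 1 0^(k-1)` (meaningful for `1 ≤ tz x`). -/
def CW (x : ℕ) : ℕ := x + 2 ^ (tz x - 1)

/-- Counterclockwise descendant: `p 1 0^k ↦ p 0 1 0^(k-1)` (meaningful for `1 ≤ tz x`). -/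
def CCW (x : ℕ) : ℕ := x - 2 ^ (tz x - 1)

/-- Parent map: `q c 1 0^m ↦ q 1 0^(m+1)`. -/
def UP (x : ℕ) : ℕ := x / 2 ^ (tz x + 2) * 2 ^ (tz x + 2) + 2 ^ (tz x + 1)

/-- One tree step from `a` to a child `b`. -/
def step (a b : ℕ) : Prop := 1 ≤ tz a ∧ (b = CW a ∨ b = CCW a)

/-- The subtree of `x`: addresses reachable by repeated `CW`/`CCW`, including `x`. -/
def subtree (x : ℕ) : Set ℕ := {y | Relation.ReflTransGen step x y}

/-- `Pos a b = p 1 0^k` where `p` is the longest common binary prefix of `a` and `b`. -/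
def Pos (a b : ℕ) : ℕ :=
  b / 2 ^ (Nat.log 2 (a ^^^ b) + 1) * 2 ^ (Nat.log 2 (a ^^^ b) + 1) + 2 ^ Nat.log 2 (a ^^^ b)

section helpers

lemma tz_dvd (s : ℕ) : 2 ^ tz s ∣ s := pow_padicValNat_dvd

lemma tz_not_dvd {s : ℕ} (hs : s ≠ 0) : ¬ 2 ^ (tz s + 1) ∣ s := by
  haveI : Fact (Nat.Prime 2) := ⟨Nat.prime_two⟩
  exact pow_succ_padicValNat_not_dvd hs

lemma tz_char {s m : ℕ} (hs : s ≠ 0) (h1 : 2 ^ m ∣ s) (h2 : ¬ 2 ^ (m + 1) ∣ s) :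
    tz s = m := by
  haveI : Fact (Nat.Prime 2) := ⟨Nat.prime_two⟩
  have a := (padicValNat_dvd_iff_le (p := 2) hs).mp h1
  have b : ¬ (m + 1 ≤ padicValNat 2 s) := fun hle =>
    h2 ((padicValNat_dvd_iff_le (p := 2) hs).mpr hle)
  unfold tz; omega

lemma tz_pow (k : ℕ) : tz (2 ^ k) = k := by
  haveI : Fact (Nat.Prime 2) := ⟨Nat.prime_two⟩
  exact padicValNat.prime_pow k

lemma tz_le {s k : ℕ} (hs : 1 ≤ s) (h2 : s < 2 ^ (k + 1)) : tz s ≤ k := by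
  have h := Nat.le_of_dvd hs (tz_dvd s)
  have := (Nat.pow_lt_pow_iff_right (a := 2) one_lt_two).mp (lt_of_le_of_lt h h2)
  omega

lemma tz_shift {p k s : ℕ} (hs : s ≠ 0) (hk : tz s ≤ k) :
    tz (p * 2 ^ (k + 1) + s) = tz s := by
  apply tz_char
  · positivity
  · exact dvd_add (dvd_mul_of_dvd_right (pow_dvd_pow 2 (by omega)) p) (tz_dvd s)
  · intro h
    have hp : 2 ^ (tz s + 1) ∣ p * 2 ^ (k + 1) :=
      dvd_mul_of_dvd_right (pow_dvd_pow 2 (by omega)) p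
    have : 2 ^ (tz s + 1) ∣ s := by
      have := Nat.dvd_sub h hp
      simpa using this
    exact tz_not_dvd hs this

lemma myAddPowLe {s m K : ℕ} (h : 2 ^ m ∣ s) (hd : 2 ^ m ∣ K) (hlt : s < K) :
    s + 2 ^ m ≤ K := by
  obtain ⟨t, rfl⟩ := h
  obtain ⟨u, rfl⟩ := hd
  have h2 : (0:ℕ) < 2 ^ m := Nat.pow_pos (n := m) (by norm_num)
  have : t < u := by
    by_contra hc
    exact absurd (Nat.mul_le_mul_left (2 ^ m) (not_lt.mp hc)) (not_le.mpr hlt)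
  calc 2 ^ m * t + 2 ^ m = 2 ^ m * (t + 1) := by ring
    _ ≤ 2 ^ m * u := Nat.mul_le_mul_left _ (by omega)

lemma eq_pow_of {s k : ℕ} (hs : 1 ≤ s) (h2 : s < 2 ^ (k + 1)) (hd : 2 ^ k ∣ s) :
    s = 2 ^ k := by
  obtain ⟨t, rfl⟩ := hd
  have h2k : (0:ℕ) < 2 ^ k := Nat.pow_pos (n := k) (by norm_num)
  have ht : t < 2 := by
    by_contra hc
    have : 2 ^ k * 2 ≤ 2 ^ k * t := Nat.mul_le_mul_left _ (not_lt.mp hc)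
    rw [pow_succ] at h2; omega
  interval_cases t <;> simp_all

lemma backward (p k : ℕ) : ∀ n s, k - tz s ≤ n → 1 ≤ s → s < 2 ^ (k + 1) →
    Relation.ReflTransGen step (p * 2 ^ (k + 1) + 2 ^ k) (p * 2 ^ (k + 1) + s) := by
  intro n
  induction n with
  | zero =>
    intro s hn hs1 hs2
    have hle := tz_le hs1 hs2
    have hm : tz s = k := by omega
    have : s = 2 ^ k := eq_pow_of hs1 hs2 (hm ▸ tz_dvd s)
    rw [this]
  | succ n ih =>
    intro s hn hs1 hs2
    have hle := tz_le hs1 hs2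
    set m := tz s with hm
    by_cases hmk : m = k
    · have : s = 2 ^ k := eq_pow_of hs1 hs2 (by rw [← hmk]; exact tz_dvd s)
      rw [this]
    · have hmlt : m < k := lt_of_le_of_ne hle hmk
      have hdm : 2 ^ m ∣ s := tz_dvd s
      have hnd : ¬ 2 ^ (m + 1) ∣ s := tz_not_dvd (by omega)
      set u := s / 2 ^ (m + 2) with hu
      set r := s % 2 ^ (m + 2) with hrdef
      have hsplit : 2 ^ (m + 2) * u + r = s := Nat.div_add_mod s (2 ^ (m + 2))
      have hrlt : r < 2 ^ (m + 2) := Nat.mod_lt s (Nat.pow_pos (by norm_num))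
      have hdu : 2 ^ m ∣ 2 ^ (m + 2) * u := dvd_mul_of_dvd_left (pow_dvd_pow 2 (by omega)) u
      have hdu1 : 2 ^ (m + 1) ∣ 2 ^ (m + 2) * u := dvd_mul_of_dvd_left (pow_dvd_pow 2 (by omega)) u
      have hdr : 2 ^ m ∣ r := by
        have := Nat.dvd_sub hdm hdu
        rw [← hsplit] at this; simpa using this
      have hndr : ¬ 2 ^ (m + 1) ∣ r := fun h => hnd (hsplit ▸ dvd_add hdu1 h)
      obtain ⟨t, ht⟩ := hdr
      have hpm : (0:ℕ) < 2 ^ m := Nat.pow_pos (n := m) (by norm_num)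
      have hp1 : 2 ^ (m + 1) = 2 * 2 ^ m := by rw [pow_succ]; ring
      have hp2 : 2 ^ (m + 2) = 4 * 2 ^ m := by rw [pow_add]; ring
      have htlt : t < 4 := by
        by_contra hc
        have : 2 ^ m * 4 ≤ 2 ^ m * t := Nat.mul_le_mul_left _ (not_lt.mp hc)
        omega
      have hodd : ¬ 2 ∣ t := by
        intro ⟨v, hv⟩
        exact hndr ⟨v, by rw [ht, hv, hp1]; ring⟩
      have ht13 : t = 1 ∨ t = 3 := by omega
      set s₀ := 2 ^ (m + 2) * u + 2 ^ (m + 1) with hs₀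
      have hts₀ : tz s₀ = m + 1 := by
        apply tz_char
        · positivity
        · exact dvd_add hdu1 dvd_rfl
        · intro h
          have h1 : 2 ^ (m + 2) ∣ 2 ^ (m + 2) * u := dvd_mul_right _ _
          have h2 : 2 ^ (m + 2) ∣ 2 ^ (m + 1) := by
            have h3 := Nat.dvd_sub h h1
            rwa [hs₀, Nat.add_sub_cancel_left] at h3
          have := Nat.le_of_dvd (Nat.pow_pos (by norm_num)) h2
          have : (2:ℕ) ^ (m + 1) < 2 ^ (m + 2) :=
            Nat.pow_lt_pow_right one_lt_two (by omega)
          omega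
      have hs₀le : s₀ + 0 ≤ 2 ^ (k + 1) := by
        rcases ht13 with rfl | rfl
        · have := myAddPowLe hdm (pow_dvd_pow 2 (by omega)) hs2
          omega
        · omega
      have hs₀ne : s₀ ≠ 2 ^ (k + 1) := by
        intro h
        have := tz_pow (k + 1)
        rw [← h, hts₀] at this; omega
      have hs₀lt : s₀ < 2 ^ (k + 1) := by omega
      have hs₀1 : 1 ≤ s₀ := Nat.one_le_iff_ne_zero.mpr (by positivity)
      have hreach := ih s₀ (by rw [hts₀]; omega) hs₀1 hs₀lt
      refine hreach.tail ?_
      have hty : tz (p * 2 ^ (k + 1) + s₀) = m + 1 := by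
        have hle' : tz s₀ ≤ k := by rw [hts₀]; omega
        rw [tz_shift (by positivity) hle', hts₀]
      constructor
      · omega
      · rcases ht13 with rfl | rfl
        · right
          unfold CCW
          rw [hty]
          simp only [Nat.add_sub_cancel]
          omega
        · left
          unfold CW
          rw [hty]
          simp only [Nat.add_sub_cancel]
          omega

end helpers

/-- the subtree of `x = p 1 0^k` is exactly
`{ p s : s ∈ {0,1}^(k+1), s ≠ 0^(k+1) }`, of cardinality `2^(k+1) - 1`. -/
theorem stmt3 (d p k x : ℕ) (hxdef : x = p * 2 ^ (k + 1) + 2 ^ k) (hx : x < 2 ^ d) :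
    subtree x = {y | ∃ s, 1 ≤ s ∧ s < 2 ^ (k + 1) ∧ y = p * 2 ^ (k + 1) + s} ∧
    (subtree x).ncard = 2 ^ (k + 1) - 1 := by
  subst hxdef
  have hmain : subtree (p * 2 ^ (k + 1) + 2 ^ k) =
      {y | ∃ s, 1 ≤ s ∧ s < 2 ^ (k + 1) ∧ y = p * 2 ^ (k + 1) + s} := by
    ext y
    constructor
    · intro hy
      induction hy with
      | refl =>
        exact ⟨2 ^ k, Nat.one_le_two_pow, Nat.pow_lt_pow_right one_lt_two (by omega), rfl⟩
      | tail hab hstep ih =>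
        obtain ⟨s, hs1, hs2, rfl⟩ := ih
        obtain ⟨hge, hcase⟩ := hstep
        have hmk : tz s ≤ k := tz_le hs1 hs2
        have hta : tz (p * 2 ^ (k + 1) + s) = tz s := tz_shift (by omega) hmk
        rw [hta] at hge
        set m := tz s with hm
        have hdm : 2 ^ m ∣ s := tz_dvd s
        have hle : 2 ^ m ≤ s := Nat.le_of_dvd hs1 hdm
        have hsplit : 2 ^ m = 2 * 2 ^ (m - 1) := by
          rw [← pow_succ']; congr 1; omega
        have hple : 2 ^ (m - 1) ∣ s := dvd_trans (pow_dvd_pow 2 (by omega)) hdm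
        have hle' : 2 ^ (m - 1) ≤ s := Nat.le_of_dvd hs1 hple
        have hone : 1 ≤ 2 ^ (m - 1) := Nat.one_le_two_pow
        rcases hcase with h | h
        · refine ⟨s + 2 ^ (m - 1), by omega, ?_, ?_⟩
          · have hb := myAddPowLe hdm (pow_dvd_pow 2 (by omega)) hs2
            omega
          · rw [h]; unfold CW; rw [hta]; exact add_assoc _ _ _
        · refine ⟨s - 2 ^ (m - 1), by omega, by omega, ?_⟩
          rw [h]; unfold CCW; rw [hta]
          omega
    · rintro ⟨s, hs1, hs2, rfl⟩
      exact backward p k (k - tz s) s le_rfl hs1 hs2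
  refine ⟨hmain, ?_⟩
  rw [hmain]
  have himg : {y | ∃ s, 1 ≤ s ∧ s < 2 ^ (k + 1) ∧ y = p * 2 ^ (k + 1) + s} =
      (fun s => p * 2 ^ (k + 1) + s) '' (Set.Ico 1 (2 ^ (k + 1))) := by
    ext y
    simp only [Set.mem_image, Set.mem_Ico, Set.mem_setOf_eq]
    constructor
    · rintro ⟨s, h1, h2, rfl⟩; exact ⟨s, ⟨h1, h2⟩, rfl⟩
    · rintro ⟨s, ⟨h1, h2⟩, rfl⟩; exact ⟨s, h1, h2, rfl⟩
  rw [himg, Set.ncard_image_of_injective _ (add_right_injective _)]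
  rw [← Finset.coe_Ico, Set.ncard_coe_finset, Nat.card_Ico]
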